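/- The type assignment system B of Barbanera–Dezani–de'Liguoro without the universal type ω assigns types only to strongly normalizing pure λ-terms: if B ⊢ M : σ is derivable (without rule (ω) and without axioms (5) and (13) involving ω in the subtyping theory), then M is strongly β-normalizing. -/

import Mathlib

set_option autoImplicit false

namespace LFDelta

/-- Equivalence closure of a relation (conversion). -/
inductive Conv {α : Type} (r : α → α → Prop) : α → α → Prop
| rel {a b : α} : r a b → Conv r a b
| refl (a : α) : Conv r a a
| symm {a b : α} : Conv r a b → Conv r b a
| trans {a b c : α} : Conv r a b → Conv r b c → Conv r a c

/-- Types of the intersection-union type assignment system B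
    (with ⊤, used only for the extended system B⁺). -/
inductive BTy : Type
| atom (a : ℕ)
| top
| arr (σ τ : BTy)
| inter (σ τ : BTy)
| union (σ τ : BTy)
deriving DecidableEq

/-- ω-free types of system B. -/
def BTy.OmegaFree : BTy → Prop
| .atom _ => True
| .top => False
| .arr σ τ => σ.OmegaFree ∧ τ.OmegaFree
| .inter σ τ => σ.OmegaFree ∧ τ.OmegaFree
| .union σ τ => σ.OmegaFree ∧ τ.OmegaFree

/-- Untyped λ-terms (de Bruijn), possibly containing constants
    (the constants c, c_× and c_{|σ|} are used for translations). -/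
inductive Lam : Type
| var (n : ℕ)
| app (M N : Lam)
| lam (M : Lam)
| const (c : ℕ)
| cx
| cty (σ : BTy)
deriving DecidableEq

namespace Lam

/-- Pure λ-terms: no constants. -/
def Pure : Lam → Prop
| .var _ => True
| .app M N => Pure M ∧ Pure N
| .lam M => Pure M
| _ => False

/-- Lift (shift) free variables ≥ c by one. -/
def lift (c : ℕ) : Lam → Lam
| .var n => if n < c then .var n else .var (n+1)
| .app M N => .app (lift c M) (lift c N)
| .lam M => .lam (lift (c+1) M)
| .const k => .const k
| .cx => .cx
| .cty σ => .cty σ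

/-- Substitute N for variable k. -/
def subst (k : ℕ) (N : Lam) : Lam → Lam
| .var n => if n < k then .var n else if n = k then (lift 0)^[k] N else .var (n-1)
| .app M₁ M₂ => .app (subst k N M₁) (subst k N M₂)
| .lam M => .lam (subst (k+1) N M)
| .const c => .const c
| .cx => .cx
| .cty σ => .cty σ

/-- One-step β-reduction. -/
inductive StepB : Lam → Lam → Prop
| beta {M N : Lam} : StepB (.app (.lam M) N) (subst 0 N M)
| appL {M M' N : Lam} : StepB M M' → StepB (.app M N) (.app M' N)
| appR {M N N' : Lam} : StepB N N' → StepB (.app M N) (.app M N')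
| lam {M M' : Lam} : StepB M M' → StepB (.lam M) (.lam M')

/-- One-step η-reduction. -/
inductive StepE : Lam → Lam → Prop
| eta {M : Lam} : StepE (.lam (.app (lift 0 M) (.var 0))) M
| appL {M M' N : Lam} : StepE M M' → StepE (.app M N) (.app M' N)
| appR {M N N' : Lam} : StepE N N' → StepE (.app M N) (.app M N')
| lam {M M' : Lam} : StepE M M' → StepE (.lam M) (.lam M')

/-- β-convertibility. -/
def BetaEq : Lam → Lam → Prop := Conv StepB

/-- βη-convertibility. -/
def BetaEtaEq : Lam → Lam → Prop := Conv (fun a b => StepB a b ∨ StepE a b)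

/-- Strong β-normalization. -/
def SNBeta (M : Lam) : Prop := Acc (fun a b => StepB b a) M

end Lam

/-- The subtype theory Ξ of system B without the ω-axioms (5) and (13),
    i.e. axioms/rules (1)-(4), (6)-(12), (14). -/
inductive SubB : BTy → BTy → Prop
| idemInter {σ : BTy} : SubB σ (.inter σ σ)                                  -- (1)
| idemUnion {σ : BTy} : SubB (.union σ σ) σ                                  -- (2)
| interL {σ τ : BTy} : SubB (.inter σ τ) σ                                   -- (3)
| interR {σ τ : BTy} : SubB (.inter σ τ) τ                                   -- (3)
| unionL {σ τ : BTy} : SubB σ (.union σ τ)                                   -- (4)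
| unionR {σ τ : BTy} : SubB τ (.union σ τ)                                   -- (4)
| refl {σ : BTy} : SubB σ σ                                                  -- (6)
| monoInter {σ₁ σ₂ τ₁ τ₂ : BTy} :
    SubB σ₁ σ₂ → SubB τ₁ τ₂ → SubB (.inter σ₁ τ₁) (.inter σ₂ τ₂)             -- (7)
| monoUnion {σ₁ σ₂ τ₁ τ₂ : BTy} :
    SubB σ₁ σ₂ → SubB τ₁ τ₂ → SubB (.union σ₁ τ₁) (.union σ₂ τ₂)             -- (8)
| trans {σ τ ρ : BTy} : SubB σ τ → SubB τ ρ → SubB σ ρ                        -- (9)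
| dist {σ τ ρ : BTy} :
    SubB (.inter σ (.union τ ρ)) (.union (.inter σ τ) (.inter σ ρ))          -- (10)
| arrInter {σ τ ρ : BTy} :
    SubB (.inter (.arr σ τ) (.arr σ ρ)) (.arr σ (.inter τ ρ))                -- (11)
| arrUnion {σ τ ρ : BTy} :
    SubB (.inter (.arr σ ρ) (.arr τ ρ)) (.arr (.union σ τ) ρ)                -- (12)
| arrow {σ₁ σ₂ τ₁ τ₂ : BTy} :
    SubB σ₂ σ₁ → SubB τ₁ τ₂ → SubB (.arr σ₁ τ₁) (.arr σ₂ τ₂)                  -- (14)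

/-- The subtype theory Ξ' (Ξ without (5), (10), (13)), parametrized by
    additional axioms `ax`. -/
inductive Xi' (ax : BTy → BTy → Prop) : BTy → BTy → Prop
| ax {σ τ : BTy} : ax σ τ → Xi' ax σ τ
| idemInter {σ : BTy} : Xi' ax σ (.inter σ σ)
| idemUnion {σ : BTy} : Xi' ax (.union σ σ) σ
| interL {σ τ : BTy} : Xi' ax (.inter σ τ) σ
| interR {σ τ : BTy} : Xi' ax (.inter σ τ) τ
| unionL {σ τ : BTy} : Xi' ax σ (.union σ τ)
| unionR {σ τ : BTy} : Xi' ax τ (.union σ τ)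
| refl {σ : BTy} : Xi' ax σ σ
| monoInter {σ₁ σ₂ τ₁ τ₂ : BTy} :
    Xi' ax σ₁ σ₂ → Xi' ax τ₁ τ₂ → Xi' ax (.inter σ₁ τ₁) (.inter σ₂ τ₂)
| monoUnion {σ₁ σ₂ τ₁ τ₂ : BTy} :
    Xi' ax σ₁ σ₂ → Xi' ax τ₁ τ₂ → Xi' ax (.union σ₁ τ₁) (.union σ₂ τ₂)
| trans {σ τ ρ : BTy} : Xi' ax σ τ → Xi' ax τ ρ → Xi' ax σ ρ
| arrInter {σ τ ρ : BTy} :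
    Xi' ax (.inter (.arr σ τ) (.arr σ ρ)) (.arr σ (.inter τ ρ))
| arrUnion {σ τ ρ : BTy} :
    Xi' ax (.inter (.arr σ ρ) (.arr τ ρ)) (.arr (.union σ τ) ρ)
| arrow {σ₁ σ₂ τ₁ τ₂ : BTy} :
    Xi' ax σ₂ σ₁ → Xi' ax τ₁ τ₂ → Xi' ax (.arr σ₁ τ₁) (.arr σ₂ τ₂)

/-- Type assignment of system B (Curry style), extended with constant
    typing axioms `ξ` and the constants c_× and c_{|σ|} of B⁺.
    With `ξ := fun _ _ => False` and on pure terms this is exactly system B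
    without ω. -/
inductive BPlus (ξ : ℕ → BTy → Prop) : List BTy → Lam → BTy → Prop
| var {Γ : List BTy} {n : ℕ} {σ : BTy} :
    Γ[n]? = some σ → BPlus ξ Γ (.var n) σ
| const {Γ : List BTy} {c : ℕ} {σ : BTy} : ξ c σ → BPlus ξ Γ (.const c) σ
| cx {Γ : List BTy} : BPlus ξ Γ .cx (.arr .top (.arr .top .top))
| cty {Γ : List BTy} {σ : BTy} :
    BPlus ξ Γ (.cty σ) (.arr .top (.arr (.arr σ .top) .top))
| abs {Γ : List BTy} {M : Lam} {σ τ : BTy} :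
    BPlus ξ (σ :: Γ) M τ → BPlus ξ Γ (.lam M) (.arr σ τ)
| app {Γ : List BTy} {M N : Lam} {σ τ : BTy} :
    BPlus ξ Γ M (.arr σ τ) → BPlus ξ Γ N σ → BPlus ξ Γ (.app M N) τ
| interI {Γ : List BTy} {M : Lam} {σ τ : BTy} :
    BPlus ξ Γ M σ → BPlus ξ Γ M τ → BPlus ξ Γ M (.inter σ τ)
| interEl {Γ : List BTy} {M : Lam} {σ τ : BTy} :
    BPlus ξ Γ M (.inter σ τ) → BPlus ξ Γ M σ
| interEr {Γ : List BTy} {M : Lam} {σ τ : BTy} :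
    BPlus ξ Γ M (.inter σ τ) → BPlus ξ Γ M τ
| unionIl {Γ : List BTy} {M : Lam} {σ τ : BTy} :
    BPlus ξ Γ M σ → BPlus ξ Γ M (.union σ τ)
| unionIr {Γ : List BTy} {M : Lam} {σ τ : BTy} :
    BPlus ξ Γ M τ → BPlus ξ Γ M (.union σ τ)
| unionE {Γ : List BTy} {M N : Lam} {σ τ ρ : BTy} :
    BPlus ξ (σ :: Γ) M ρ → BPlus ξ (τ :: Γ) M ρ → BPlus ξ Γ N (.union σ τ) →
    BPlus ξ Γ (Lam.subst 0 N M) ρ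
| sub {Γ : List BTy} {M : Lam} {σ τ : BTy} :
    BPlus ξ Γ M σ → SubB σ τ → BPlus ξ Γ M τ

/-- The pseudo-terms of LF_Δ: kinds, families and objects in a single syntax
    (the typing judgments single out each syntactic class). -/
inductive Tm : Type
| type                        -- the kind Type
| pi (σ τ : Tm)               -- Πx:σ.K and Πx:σ.τ
| rarr (σ τ : Tm)             -- relevant family σ →ʳ τ
| inter (σ τ : Tm)            -- intersection family
| union (σ τ : Tm)            -- union family
| const (c : ℕ)               -- constants (family- and object-level)
| var (n : ℕ)                 -- variables (de Bruijn)
| lam (σ Δ : Tm)              -- λx:σ.Δ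
| app (Δ₁ Δ₂ : Tm)            -- application (of families and of objects)
| rlam (σ Δ : Tm)             -- relevant abstraction λʳx:σ.Δ
| rapp (Δ₁ Δ₂ : Tm)           -- relevant application
| pair (Δ₁ Δ₂ : Tm)           -- strong pair ⟨Δ₁,Δ₂⟩
| copair (Δ₁ Δ₂ : Tm)         -- strong co-pair [Δ₁,Δ₂]
| prl (Δ : Tm)                -- left projection
| prr (Δ : Tm)                -- right projection
| inl (σ Δ : Tm)              -- injection in_l^σ Δ
| inr (σ Δ : Tm)              -- injection in_r^σ Δ
deriving DecidableEq

namespace Tm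

/-- Lift free variables ≥ c by one. -/
def lift (c : ℕ) : Tm → Tm
| .type => .type
| .pi σ τ => .pi (lift c σ) (lift (c+1) τ)
| .rarr σ τ => .rarr (lift c σ) (lift c τ)
| .inter σ τ => .inter (lift c σ) (lift c τ)
| .union σ τ => .union (lift c σ) (lift c τ)
| .const k => .const k
| .var n => if n < c then .var n else .var (n+1)
| .lam σ Δ => .lam (lift c σ) (lift (c+1) Δ)
| .app Δ₁ Δ₂ => .app (lift c Δ₁) (lift c Δ₂)
| .rlam σ Δ => .rlam (lift c σ) (lift (c+1) Δ)
| .rapp Δ₁ Δ₂ => .rapp (lift c Δ₁) (lift c Δ₂)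
| .pair Δ₁ Δ₂ => .pair (lift c Δ₁) (lift c Δ₂)
| .copair Δ₁ Δ₂ => .copair (lift c Δ₁) (lift c Δ₂)
| .prl Δ => .prl (lift c Δ)
| .prr Δ => .prr (lift c Δ)
| .inl σ Δ => .inl (lift c σ) (lift c Δ)
| .inr σ Δ => .inr (lift c σ) (lift c Δ)

/-- Substitute the object N for variable k. -/
def subst (k : ℕ) (N : Tm) : Tm → Tm
| .type => .type
| .pi σ τ => .pi (subst k N σ) (subst (k+1) N τ)
| .rarr σ τ => .rarr (subst k N σ) (subst k N τ)
| .inter σ τ => .inter (subst k N σ) (subst k N τ)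
| .union σ τ => .union (subst k N σ) (subst k N τ)
| .const c => .const c
| .var n => if n < k then .var n else if n = k then (lift 0)^[k] N else .var (n-1)
| .lam σ Δ => .lam (subst k N σ) (subst (k+1) N Δ)
| .app Δ₁ Δ₂ => .app (subst k N Δ₁) (subst k N Δ₂)
| .rlam σ Δ => .rlam (subst k N σ) (subst (k+1) N Δ)
| .rapp Δ₁ Δ₂ => .rapp (subst k N Δ₁) (subst k N Δ₂)
| .pair Δ₁ Δ₂ => .pair (subst k N Δ₁) (subst k N Δ₂)
| .copair Δ₁ Δ₂ => .copair (subst k N Δ₁) (subst k N Δ₂)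
| .prl Δ => .prl (subst k N Δ)
| .prr Δ => .prr (subst k N Δ)
| .inl σ Δ => .inl (subst k N σ) (subst k N Δ)
| .inr σ Δ => .inr (subst k N σ) (subst k N Δ)

end Tm

/-- The essence function: compositionally erases all type annotations and
    proof-functional constructs (on non-objects it returns a dummy value). -/
def essence : Tm → Lam
| .var n => .var n
| .const c => .const c
| .lam _ Δ => .lam (essence Δ)
| .rlam _ Δ => .lam (essence Δ)
| .app Δ₁ Δ₂ => .app (essence Δ₁) (essence Δ₂)
| .rapp _ Δ₂ => essence Δ₂
| .pair Δ₁ _ => essence Δ₁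
| .copair Δ₁ _ => essence Δ₁
| .prl Δ => essence Δ
| .prr Δ => essence Δ
| .inl _ Δ => essence Δ
| .inr _ Δ => essence Δ
| .type => .const 0
| .pi _ _ => .const 0
| .rarr _ _ => .const 0
| .inter _ _ => .const 0
| .union _ _ => .const 0

/-- One-step reduction →_Δ of LF_Δ. Congruence rules are standard, except
    that the components of strong pairs and co-pairs must reduce in parallel,
    keeping identical essences. -/
inductive Step : Tm → Tm → Prop
| beta {σ Δ₁ Δ₂ : Tm} : Step (.app (.lam σ Δ₁) Δ₂) (Tm.subst 0 Δ₂ Δ₁)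
| rbeta {σ Δ₁ Δ₂ : Tm} : Step (.rapp (.rlam σ Δ₁) Δ₂) (Tm.subst 0 Δ₂ Δ₁)
| prl {Δ₁ Δ₂ : Tm} : Step (.prl (.pair Δ₁ Δ₂)) Δ₁
| prr {Δ₁ Δ₂ : Tm} : Step (.prr (.pair Δ₁ Δ₂)) Δ₂
| coInl {Δ₁ Δ₂ σ Δ₃ : Tm} :
    Step (.app (.copair Δ₁ Δ₂) (.inl σ Δ₃)) (.app Δ₁ Δ₃)
| coInr {Δ₁ Δ₂ σ Δ₃ : Tm} :
    Step (.app (.copair Δ₁ Δ₂) (.inr σ Δ₃)) (.app Δ₂ Δ₃)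
| piL {σ σ' τ : Tm} : Step σ σ' → Step (.pi σ τ) (.pi σ' τ)
| piR {σ τ τ' : Tm} : Step τ τ' → Step (.pi σ τ) (.pi σ τ')
| rarrL {σ σ' τ : Tm} : Step σ σ' → Step (.rarr σ τ) (.rarr σ' τ)
| rarrR {σ τ τ' : Tm} : Step τ τ' → Step (.rarr σ τ) (.rarr σ τ')
| interL {σ σ' τ : Tm} : Step σ σ' → Step (.inter σ τ) (.inter σ' τ)
| interR {σ τ τ' : Tm} : Step τ τ' → Step (.inter σ τ) (.inter σ τ')
| unionL {σ σ' τ : Tm} : Step σ σ' → Step (.union σ τ) (.union σ' τ)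
| unionR {σ τ τ' : Tm} : Step τ τ' → Step (.union σ τ) (.union σ τ')
| lamL {σ σ' Δ : Tm} : Step σ σ' → Step (.lam σ Δ) (.lam σ' Δ)
| lamR {σ Δ Δ' : Tm} : Step Δ Δ' → Step (.lam σ Δ) (.lam σ Δ')
| rlamL {σ σ' Δ : Tm} : Step σ σ' → Step (.rlam σ Δ) (.rlam σ' Δ)
| rlamR {σ Δ Δ' : Tm} : Step Δ Δ' → Step (.rlam σ Δ) (.rlam σ Δ')
| appL {Δ₁ Δ₁' Δ₂ : Tm} : Step Δ₁ Δ₁' → Step (.app Δ₁ Δ₂) (.app Δ₁' Δ₂)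
| appR {Δ₁ Δ₂ Δ₂' : Tm} : Step Δ₂ Δ₂' → Step (.app Δ₁ Δ₂) (.app Δ₁ Δ₂')
| rappL {Δ₁ Δ₁' Δ₂ : Tm} : Step Δ₁ Δ₁' → Step (.rapp Δ₁ Δ₂) (.rapp Δ₁' Δ₂)
| rappR {Δ₁ Δ₂ Δ₂' : Tm} : Step Δ₂ Δ₂' → Step (.rapp Δ₁ Δ₂) (.rapp Δ₁ Δ₂')
| prlC {Δ Δ' : Tm} : Step Δ Δ' → Step (.prl Δ) (.prl Δ')
| prrC {Δ Δ' : Tm} : Step Δ Δ' → Step (.prr Δ) (.prr Δ')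
| inlL {σ σ' Δ : Tm} : Step σ σ' → Step (.inl σ Δ) (.inl σ' Δ)
| inlR {σ Δ Δ' : Tm} : Step Δ Δ' → Step (.inl σ Δ) (.inl σ Δ')
| inrL {σ σ' Δ : Tm} : Step σ σ' → Step (.inr σ Δ) (.inr σ' Δ)
| inrR {σ Δ Δ' : Tm} : Step Δ Δ' → Step (.inr σ Δ) (.inr σ Δ')
| pairC {Δ₁ Δ₁' Δ₂ Δ₂' : Tm} :
    Step Δ₁ Δ₁' → Step Δ₂ Δ₂' → essence Δ₁' = essence Δ₂' →
    Step (.pair Δ₁ Δ₂) (.pair Δ₁' Δ₂')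
| copairC {Δ₁ Δ₁' Δ₂ Δ₂' : Tm} :
    Step Δ₁ Δ₁' → Step Δ₂ Δ₂' → essence Δ₁' = essence Δ₂' →
    Step (.copair Δ₁ Δ₂) (.copair Δ₁' Δ₂')

/-- Definitional equality =_Δ : the symmetric reflexive transitive closure
    of →_Δ. -/
def DefEq : Tm → Tm → Prop := Conv Step

/-- Strong normalization w.r.t. →_Δ. -/
def SNTm (t : Tm) : Prop := Acc (fun a b => Step b a) t

/-- Signature entries: kind declarations a:K and type declarations c:σ. -/
inductive SigEntry : Type
| kd (a : ℕ) (K : Tm)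
| ty (c : ℕ) (σ : Tm)
deriving DecidableEq

abbrev Sig := List SigEntry
abbrev Ctx := List Tm

/-- c is declared in the signature. -/
def inDom (S : Sig) (c : ℕ) : Prop :=
  (∃ K, SigEntry.kd c K ∈ S) ∨ (∃ σ, SigEntry.ty c σ ∈ S)

/-- Context lookup, with the appropriate lifting. -/
inductive VarTy : Ctx → ℕ → Tm → Prop
| zero {Γ : Ctx} {σ : Tm} : VarTy (σ :: Γ) 0 (Tm.lift 0 σ)
| succ {Γ : Ctx} {n : ℕ} {σ τ : Tm} :
    VarTy Γ n σ → VarTy (τ :: Γ) (n+1) (Tm.lift 0 σ)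

mutual
/-- Σ is a valid signature. -/
inductive SigOk : Sig → Prop
| nil : SigOk []
| kd {S : Sig} {a : ℕ} {K : Tm} :
    SigOk S → KindOk S [] K → ¬ inDom S a → SigOk (.kd a K :: S)
| ty {S : Sig} {c : ℕ} {σ : Tm} :
    SigOk S → FamTy S [] σ .type → ¬ inDom S c → SigOk (.ty c σ :: S)

/-- Γ is a valid context in Σ. -/
inductive CtxOk : Sig → Ctx → Prop
| nil {S : Sig} : SigOk S → CtxOk S []
| cons {S : Sig} {Γ : Ctx} {σ : Tm} :
    CtxOk S Γ → FamTy S Γ σ .type → CtxOk S (σ :: Γ)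

/-- K is a kind in Γ and Σ. -/
inductive KindOk : Sig → Ctx → Tm → Prop
| type {S : Sig} {Γ : Ctx} : CtxOk S Γ → KindOk S Γ .type
| pi {S : Sig} {Γ : Ctx} {σ K : Tm} :
    FamTy S Γ σ .type → KindOk S (σ :: Γ) K → KindOk S Γ (.pi σ K)

/-- σ has kind K in Γ and Σ. -/
inductive FamTy : Sig → Ctx → Tm → Tm → Prop
| const {S : Sig} {Γ : Ctx} {a : ℕ} {K : Tm} :
    CtxOk S Γ → SigEntry.kd a K ∈ S → FamTy S Γ (.const a) K
| pi {S : Sig} {Γ : Ctx} {σ τ : Tm} :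
    FamTy S Γ σ .type → FamTy S (σ :: Γ) τ .type → FamTy S Γ (.pi σ τ) .type
| app {S : Sig} {Γ : Ctx} {σ τ K Δ : Tm} :
    FamTy S Γ σ (.pi τ K) → ObjTy S Γ Δ τ →
    FamTy S Γ (.app σ Δ) (Tm.subst 0 Δ K)
| rarr {S : Sig} {Γ : Ctx} {σ τ : Tm} :
    FamTy S Γ σ .type → FamTy S Γ τ .type → FamTy S Γ (.rarr σ τ) .type
| inter {S : Sig} {Γ : Ctx} {σ τ : Tm} :
    FamTy S Γ σ .type → FamTy S Γ τ .type → FamTy S Γ (.inter σ τ) .type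
| union {S : Sig} {Γ : Ctx} {σ τ : Tm} :
    FamTy S Γ σ .type → FamTy S Γ τ .type → FamTy S Γ (.union σ τ) .type
| conv {S : Sig} {Γ : Ctx} {σ K₁ K₂ : Tm} :
    FamTy S Γ σ K₁ → KindOk S Γ K₂ → DefEq K₁ K₂ → FamTy S Γ σ K₂

/-- Δ has type σ in Γ and Σ. -/
inductive ObjTy : Sig → Ctx → Tm → Tm → Prop
| const {S : Sig} {Γ : Ctx} {c : ℕ} {σ : Tm} :
    CtxOk S Γ → SigEntry.ty c σ ∈ S → ObjTy S Γ (.const c) σ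
| var {S : Sig} {Γ : Ctx} {n : ℕ} {σ : Tm} :
    CtxOk S Γ → VarTy Γ n σ → ObjTy S Γ (.var n) σ
| lam {S : Sig} {Γ : Ctx} {σ τ Δ : Tm} :
    ObjTy S (σ :: Γ) Δ τ → ObjTy S Γ (.lam σ Δ) (.pi σ τ)
| app {S : Sig} {Γ : Ctx} {σ τ Δ₁ Δ₂ : Tm} :
    ObjTy S Γ Δ₁ (.pi σ τ) → ObjTy S Γ Δ₂ σ →
    ObjTy S Γ (.app Δ₁ Δ₂) (Tm.subst 0 Δ₂ τ)
| rlam {S : Sig} {Γ : Ctx} {σ τ Δ : Tm} :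
    ObjTy S (σ :: Γ) Δ (Tm.lift 0 τ) →
    Lam.BetaEtaEq (essence Δ) (.var 0) →
    ObjTy S Γ (.rlam σ Δ) (.rarr σ τ)
| rapp {S : Sig} {Γ : Ctx} {σ τ Δ₁ Δ₂ : Tm} :
    ObjTy S Γ Δ₁ (.rarr σ τ) → ObjTy S Γ Δ₂ σ → ObjTy S Γ (.rapp Δ₁ Δ₂) τ
| pair {S : Sig} {Γ : Ctx} {σ τ Δ₁ Δ₂ : Tm} :
    ObjTy S Γ Δ₁ σ → ObjTy S Γ Δ₂ τ →
    Lam.BetaEtaEq (essence Δ₁) (essence Δ₂) →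
    ObjTy S Γ (.pair Δ₁ Δ₂) (.inter σ τ)
| prl {S : Sig} {Γ : Ctx} {σ τ Δ : Tm} :
    ObjTy S Γ Δ (.inter σ τ) → ObjTy S Γ (.prl Δ) σ
| prr {S : Sig} {Γ : Ctx} {σ τ Δ : Tm} :
    ObjTy S Γ Δ (.inter σ τ) → ObjTy S Γ (.prr Δ) τ
| inl {S : Sig} {Γ : Ctx} {σ τ Δ : Tm} :
    ObjTy S Γ Δ σ → FamTy S Γ (.union σ τ) .type →
    ObjTy S Γ (.inl τ Δ) (.union σ τ)
| inr {S : Sig} {Γ : Ctx} {σ τ Δ : Tm} :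
    ObjTy S Γ Δ τ → FamTy S Γ (.union σ τ) .type →
    ObjTy S Γ (.inr σ Δ) (.union σ τ)
| copair {S : Sig} {Γ : Ctx} {σ τ ρ Δ₁ Δ₂ : Tm} :
    ObjTy S Γ Δ₁
      (.pi σ (Tm.subst 0 (.inl (Tm.lift 0 τ) (.var 0)) (Tm.lift 1 ρ))) →
    ObjTy S Γ Δ₂
      (.pi τ (Tm.subst 0 (.inr (Tm.lift 0 σ) (.var 0)) (Tm.lift 1 ρ))) →
    FamTy S (.union σ τ :: Γ) ρ .type →
    Lam.BetaEtaEq (essence Δ₁) (essence Δ₂) →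
    ObjTy S Γ (.copair Δ₁ Δ₂) (.pi (.union σ τ) ρ)
| conv {S : Sig} {Γ : Ctx} {σ τ Δ : Tm} :
    ObjTy S Γ Δ σ → FamTy S Γ τ .type → DefEq σ τ → ObjTy S Γ Δ τ
end

/-- The dependency-erasing translation |·| on families and kinds. -/
def eraseTy : Tm → BTy
| .type => .top
| .pi σ τ => .arr (eraseTy σ) (eraseTy τ)
| .rarr σ τ => .arr (eraseTy σ) (eraseTy τ)
| .inter σ τ => .inter (eraseTy σ) (eraseTy τ)
| .union σ τ => .union (eraseTy σ) (eraseTy τ)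
| .const a => .atom a
| .app σ _ => eraseTy σ
| _ => .top

/-- The forgetful translation ‖·‖ of LF_Δ objects and families into pure
    λ-terms with constants, flattening type annotations into redexes. -/
def tr : Tm → Lam
| .type => .const 0
| .pi σ τ => .app (.app (.cty (eraseTy σ)) (tr σ)) (.lam (tr τ))
| .rarr σ τ => .app (.app .cx (tr σ)) (tr τ)
| .inter σ τ => .app (.app .cx (tr σ)) (tr τ)
| .union σ τ => .app (.app .cx (tr σ)) (tr τ)
| .const c => .const c
| .var n => .var n
| .lam σ Δ => .app (.lam (.lam (Lam.lift 1 (tr Δ)))) (tr σ)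
| .rlam σ Δ => .app (.lam (.lam (Lam.lift 1 (tr Δ)))) (tr σ)
| .app Δ₁ Δ₂ => .app (tr Δ₁) (tr Δ₂)
| .rapp Δ₁ Δ₂ => .app (tr Δ₁) (tr Δ₂)
| .pair Δ₁ _ => tr Δ₁
| .copair Δ₁ _ => tr Δ₁
| .prl Δ => tr Δ
| .prr Δ => tr Δ
| .inl σ Δ => .app (.lam (Lam.lift 0 (tr Δ))) (tr σ)
| .inr σ Δ => .app (.lam (Lam.lift 0 (tr Δ))) (tr σ)

/-- Constant typing axioms of B⁺ induced by a signature. -/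
def sigXi (S : Sig) : ℕ → BTy → Prop :=
  fun c τ => (∃ σ, SigEntry.ty c σ ∈ S ∧ τ = eraseTy σ) ∨
             (∃ K, SigEntry.kd c K ∈ S ∧ τ = eraseTy K)

/-- Embedding of (non-dependent, relevance-free) B types as LF_Δ families. -/
def toFam : BTy → Tm
| .atom a => .const a
| .top => .const 0
| .arr σ τ => .pi (toFam σ) (Tm.lift 0 (toFam τ))
| .inter σ τ => .inter (toFam σ) (toFam τ)
| .union σ τ => .union (toFam σ) (toFam τ)


/-! ### Strong normalization development -/

namespace SNProof

open Lam

/-- Flipped β-step (for `Acc`). -/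
abbrev Red : Lam → Lam → Prop := fun a b => Lam.StepB b a

/-- Cons for substitution environments. -/
def scons (N : Lam) (θ : ℕ → Lam) : ℕ → Lam
| 0 => N
| n+1 => θ n

/-- Lifting an environment under a binder. -/
def up (θ : ℕ → Lam) : ℕ → Lam := scons (.var 0) (fun n => Lam.lift 0 (θ n))

/-- Parallel substitution. -/
def msub (θ : ℕ → Lam) : Lam → Lam
| .var n => θ n
| .app M N => .app (msub θ M) (msub θ N)
| .lam M => .lam (msub (up θ) M)
| .const c => .const c
| .cx => .cx
| .cty σ => .cty σ

lemma up_ext {θ θ' : ℕ → Lam} (h : ∀ n, θ n = θ' n) : ∀ n, up θ n = up θ' n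
| 0 => rfl
| n+1 => by simp only [up, scons, h n]

lemma msub_ext : ∀ (M : Lam) {θ θ' : ℕ → Lam}, (∀ n, θ n = θ' n) →
    msub θ M = msub θ' M := by
  intro M
  induction M with
  | var n => intro θ θ' h; exact h n
  | app M N ihM ihN => intro θ θ' h; simp only [msub]; rw [ihM h, ihN h]
  | lam M ih => intro θ θ' h; simp only [msub]; rw [ih (up_ext h)]
  | const c => intro θ θ' _; rfl
  | cx => intro θ θ' _; rfl
  | cty σ => intro θ θ' _; rfl

lemma lift_lift : ∀ (M : Lam) {c d : ℕ}, c ≤ d →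
    lift c (lift d M) = lift (d+1) (lift c M) := by
  intro M
  induction M with
  | var n =>
      intro c d h
      simp only [Lam.lift]
      rcases Nat.lt_or_ge n c with h1 | h1
      · rw [if_pos (lt_of_lt_of_le h1 h), if_pos h1]
        simp only [Lam.lift]
        rw [if_pos h1, if_pos (by omega : n < d + 1)]
      · rcases Nat.lt_or_ge n d with h2 | h2
        · rw [if_pos h2, if_neg (not_lt.2 h1)]
          simp only [Lam.lift]
          rw [if_neg (not_lt.2 h1), if_pos (by omega : n + 1 < d + 1)]
        · rw [if_neg (not_lt.2 h2), if_neg (not_lt.2 h1)]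
          simp only [Lam.lift]
          rw [if_neg (by omega : ¬ n + 1 < c), if_neg (by omega : ¬ n + 1 < d + 1)]
  | app M N ihM ihN => intro c d h; simp only [Lam.lift]; rw [ihM h, ihN h]
  | lam M ih => intro c d h; simp only [Lam.lift]; rw [ih (by omega)]
  | const c' => intro c d h; rfl
  | cx => intro c d h; rfl
  | cty σ => intro c d h; rfl

/-- `lift c` as a parallel substitution. -/
def liftEnv (c : ℕ) : ℕ → Lam := fun n => if n < c then .var n else .var (n+1)

lemma lift_eq_msub : ∀ (M : Lam) (c : ℕ), lift c M = msub (liftEnv c) M := by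
  intro M
  induction M with
  | var n => intro c; rfl
  | app M N ihM ihN => intro c; simp only [Lam.lift, msub]; rw [ihM, ihN]
  | lam M ih =>
      intro c
      simp only [Lam.lift, msub]
      rw [ih (c+1)]
      refine congrArg _ (msub_ext M ?_)
      intro n
      cases n with
      | zero => simp [liftEnv, up, scons]
      | succ n =>
          simp only [liftEnv, up, scons]
          rcases Nat.lt_or_ge n c with h | h
          · rw [if_pos (by omega : n + 1 < c + 1), if_pos h]; rfl
          · rw [if_neg (by omega : ¬ n + 1 < c + 1), if_neg (not_lt.2 h)]
            simp [Lam.lift]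
  | const c' => intro c; rfl
  | cx => intro c; rfl
  | cty σ => intro c; rfl

/-- sub-ren commutation. -/
lemma lift_msub : ∀ (M : Lam) (θ : ℕ → Lam) (c : ℕ),
    lift c (msub θ M) = msub (fun n => lift c (θ n)) M := by
  intro M
  induction M with
  | var n => intro θ c; rfl
  | app M N ihM ihN => intro θ c; simp only [Lam.lift, msub]; rw [ihM, ihN]
  | lam M ih =>
      intro θ c
      simp only [Lam.lift, msub]
      rw [ih]
      refine congrArg _ (msub_ext M ?_)
      intro n
      cases n with
      | zero => simp [up, scons, Lam.lift]
      | succ n =>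
          simp only [up, scons]
          exact (lift_lift (θ n) (Nat.zero_le c)).symm
  | const c' => intro θ c; rfl
  | cx => intro θ c; rfl
  | cty σ => intro θ c; rfl

/-- ren-sub commutation. -/
lemma msub_lift : ∀ (M : Lam) (θ : ℕ → Lam) (c : ℕ),
    msub θ (lift c M) = msub (fun n => if n < c then θ n else θ (n+1)) M := by
  intro M
  induction M with
  | var n =>
      intro θ c
      simp only [Lam.lift]
      rcases Nat.lt_or_ge n c with h | h
      · rw [if_pos h]; simp only [msub]; rw [if_pos h]
      · rw [if_neg (not_lt.2 h)]; simp only [msub]; rw [if_neg (not_lt.2 h)]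
  | app M N ihM ihN => intro θ c; simp only [Lam.lift, msub]; rw [ihM, ihN]
  | lam M ih =>
      intro θ c
      simp only [Lam.lift, msub]
      rw [ih]
      refine congrArg _ (msub_ext M ?_)
      intro n
      cases n with
      | zero => simp [up, scons]
      | succ n =>
          simp only [up, scons]
          rcases Nat.lt_or_ge n c with h | h
          · rw [if_pos (by omega : n + 1 < c + 1), if_pos h]
          · rw [if_neg (by omega : ¬ n + 1 < c + 1), if_neg (not_lt.2 h)]
  | const c' => intro θ c; rfl
  | cx => intro θ c; rfl
  | cty σ => intro θ c; rfl

lemma msub_id : ∀ (M : Lam), msub Lam.var M = M := by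
  intro M
  induction M with
  | var n => rfl
  | app M N ihM ihN => simp only [msub]; rw [ihM, ihN]
  | lam M ih =>
      simp only [msub]
      rw [msub_ext M (θ' := Lam.var) ?_, ih]
      intro n
      cases n with
      | zero => rfl
      | succ n => simp [up, scons, Lam.lift]
  | const c => rfl
  | cx => rfl
  | cty σ => rfl

lemma msub_comp : ∀ (M : Lam) (θ θ' : ℕ → Lam),
    msub θ (msub θ' M) = msub (fun n => msub θ (θ' n)) M := by
  intro M
  induction M with
  | var n => intro θ θ'; rfl
  | app M N ihM ihN => intro θ θ'; simp only [msub]; rw [ihM, ihN]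
  | lam M ih =>
      intro θ θ'
      simp only [msub]
      rw [ih]
      refine congrArg _ (msub_ext M ?_)
      intro n
      cases n with
      | zero => rfl
      | succ n =>
          simp only [up, scons]
          rw [msub_lift, lift_msub]
          refine msub_ext (θ' n) ?_
          intro m
          simp [scons]
  | const c => intro θ θ'; rfl
  | cx => intro θ θ'; rfl
  | cty σ => intro θ θ'; rfl

/-- `subst k N` as a parallel substitution. -/
def substEnv (k : ℕ) (N : Lam) : ℕ → Lam :=
  fun n => if n < k then .var n else if n = k then (Lam.lift 0)^[k] N else .var (n-1)

lemma subst_eq_msub : ∀ (M : Lam) (k : ℕ) (N : Lam),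
    Lam.subst k N M = msub (substEnv k N) M := by
  intro M
  induction M with
  | var n => intro k N; rfl
  | app M N' ihM ihN => intro k N; simp only [Lam.subst, msub]; rw [ihM, ihN]
  | lam M ih =>
      intro k N
      simp only [Lam.subst, msub]
      rw [ih (k+1) N]
      refine congrArg _ (msub_ext M ?_)
      intro n
      cases n with
      | zero => simp [substEnv, up, scons]
      | succ n =>
          simp only [substEnv, up, scons]
          rcases Nat.lt_or_ge n k with h | h
          · rw [if_pos (by omega : n + 1 < k + 1), if_pos h]; simp [Lam.lift]
          · rcases eq_or_lt_of_le h with h' | h'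
            · rw [if_neg (by omega : ¬ n + 1 < k + 1),
                  if_pos (by omega : n + 1 = k + 1),
                  if_neg (not_lt.2 h), if_pos h'.symm]
              exact Function.iterate_succ_apply' (Lam.lift 0) k N
            · rw [if_neg (by omega : ¬ n + 1 < k + 1),
                  if_neg (by omega : ¬ n + 1 = k + 1),
                  if_neg (not_lt.2 h), if_neg (by omega : ¬ n = k)]
              simp only [Lam.lift]
              rw [if_neg (by omega : ¬ n - 1 < 0)]
              congr 1
              omega
  | const c => intro k N; rfl
  | cx => intro k N; rfl
  | cty σ => intro k N; rfl

lemma subst0_eq_msub (N M : Lam) :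
    Lam.subst 0 N M = msub (scons N Lam.var) M := by
  rw [subst_eq_msub]
  refine msub_ext M ?_
  intro n
  cases n with
  | zero => rfl
  | succ n => simp [substEnv, scons]

/-- (A) β-substitution under an environment. -/
lemma subst0_msub_up (N : Lam) (θ : ℕ → Lam) (M : Lam) :
    Lam.subst 0 N (msub (up θ) M) = msub (scons N θ) M := by
  rw [subst0_eq_msub, msub_comp]
  refine msub_ext M ?_
  intro n
  cases n with
  | zero => rfl
  | succ n =>
      simp only [up, scons]
      rw [lift_eq_msub (θ n) 0, msub_comp]
      have : (fun m => msub (scons N Lam.var) (liftEnv 0 m)) = Lam.var := by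
        funext m; simp [liftEnv, msub, scons]
      rw [this, msub_id]

/-- (B) environment applied to a β-substitution. -/
lemma msub_subst0 (θ : ℕ → Lam) (N M : Lam) :
    msub θ (Lam.subst 0 N M) = msub (scons (msub θ N) θ) M := by
  rw [subst0_eq_msub, msub_comp]
  refine msub_ext M ?_
  intro n
  cases n with
  | zero => rfl
  | succ n => rfl

/-- Steps are preserved by parallel substitution. -/
lemma step_msub : ∀ {M M' : Lam}, StepB M M' → ∀ (θ : ℕ → Lam),
    StepB (msub θ M) (msub θ M') := by
  intro M M' h
  induction h with
  | @beta M N =>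
      intro θ
      simp only [msub]
      rw [msub_subst0, ← subst0_msub_up (msub θ N) θ M]
      exact StepB.beta
  | appL _ ih => intro θ; exact StepB.appL (ih θ)
  | appR _ ih => intro θ; exact StepB.appR (ih θ)
  | lam _ ih => intro θ; exact StepB.lam (ih (up θ))

lemma step_subst0 {M M' : Lam} (h : StepB M M') (N : Lam) :
    StepB (Lam.subst 0 N M) (Lam.subst 0 N M') := by
  rw [subst0_eq_msub, subst0_eq_msub]
  exact step_msub h _

lemma step_lift {M M' : Lam} (h : StepB M M') (c : ℕ) :
    StepB (lift c M) (lift c M') := by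
  rw [lift_eq_msub, lift_eq_msub]
  exact step_msub h _

open Relation in
lemma rtg_app_left {M M' N : Lam} (h : ReflTransGen StepB M M') :
    ReflTransGen StepB (.app M N) (.app M' N) :=
  ReflTransGen.lift (fun x => Lam.app x N) (fun _ _ hs => StepB.appL hs) _ _ h

open Relation in
lemma rtg_lift {M M' : Lam} (h : ReflTransGen StepB M M') (c : ℕ) :
    ReflTransGen StepB (lift c M) (lift c M') :=
  ReflTransGen.lift (Lam.lift c) (fun _ _ hs => step_lift hs c) _ _ h

open Relation in
lemma msub_rtg : ∀ (M : Lam) {θ θ' : ℕ → Lam},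
    (∀ n, ReflTransGen StepB (θ n) (θ' n)) →
    ReflTransGen StepB (msub θ M) (msub θ' M) := by
  intro M
  induction M with
  | var n => intro θ θ' h; exact h n
  | app M N ihM ihN =>
      intro θ θ' h
      refine ReflTransGen.trans (rtg_app_left (ihM h)) ?_
      exact ReflTransGen.lift (fun x => Lam.app (msub θ' M) x)
        (fun _ _ hs => StepB.appR hs) _ _ (ihN h)
  | lam M ih =>
      intro θ θ' h
      refine ReflTransGen.lift Lam.lam (fun _ _ hs => StepB.lam hs) _ _ ?_
      refine ih ?_
      intro n
      cases n with
      | zero => exact ReflTransGen.refl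
      | succ n => exact rtg_lift (h n) 0
  | const c => intro θ θ' _; exact ReflTransGen.refl
  | cx => intro θ θ' _; exact ReflTransGen.refl
  | cty σ => intro θ θ' _; exact ReflTransGen.refl

open Relation in
lemma rtg_subst0_arg {N N' : Lam} (h : StepB N N') (M : Lam) :
    ReflTransGen StepB (Lam.subst 0 N M) (Lam.subst 0 N' M) := by
  rw [subst0_eq_msub, subst0_eq_msub]
  refine msub_rtg M ?_
  intro n
  cases n with
  | zero => exact ReflTransGen.single h
  | succ n => exact ReflTransGen.refl

/-! #### Acc machinery -/

lemma sn_of_map {f : Lam → Lam} (hf : ∀ a b, StepB a b → StepB (f a) (f b)) :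
    ∀ {M : Lam}, Acc Red (f M) → Acc Red M := by
  have aux : ∀ X, Acc Red X → ∀ M, X = f M → Acc Red M := by
    intro X hX
    induction hX with
    | intro X _ ih =>
        intro M hM
        refine Acc.intro M (fun y hy => ?_)
        exact ih (f y) (hM ▸ hf M y hy) y rfl
  intro M h
  exact aux _ h M rfl

lemma sn_app_left {M N : Lam} (h : Acc Red (Lam.app M N)) : Acc Red M :=
  sn_of_map (f := fun x => Lam.app x N) (fun _ _ hs => StepB.appL hs) h

lemma sn_step {M M' : Lam} (h : Acc Red M) (hs : StepB M M') : Acc Red M' :=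
  Acc.inv h hs

open Relation in
lemma sn_rtg {M M' : Lam} (h : Acc Red M) (hs : ReflTransGen StepB M M') :
    Acc Red M' := by
  induction hs with
  | refl => exact h
  | tail _ hstep ih => exact sn_step ih hstep

/-- Application spines. -/
def apps (H : Lam) (Ps : List Lam) : Lam := Ps.foldl .app H

lemma apps_cons (H P : Lam) (Ps : List Lam) :
    apps H (P :: Ps) = apps (.app H P) Ps := rfl

lemma apps_concat (H : Lam) (Ps : List Lam) (P : Lam) :
    apps H (Ps ++ [P]) = .app (apps H Ps) P := by
  simp [apps, List.foldl_append]

lemma apps_step_head {H H' : Lam} (h : StepB H H') :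
    ∀ (Ps : List Lam), StepB (apps H Ps) (apps H' Ps) := by
  intro Ps
  induction Ps generalizing H H' with
  | nil => exact h
  | cons P Ps ih => exact ih (StepB.appL h)

open Relation in
lemma apps_rtg_head {H H' : Lam} (h : ReflTransGen StepB H H') (Ps : List Lam) :
    ReflTransGen StepB (apps H Ps) (apps H' Ps) :=
  ReflTransGen.lift (fun x => apps x Ps) (fun _ _ hs => apps_step_head hs Ps) _ _ h

lemma sn_apps_head : ∀ (Ps : List Lam) {H : Lam}, Acc Red (apps H Ps) → Acc Red H := by
  intro Ps
  induction Ps with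
  | nil => intro H h; exact h
  | cons P Ps ih => intro H h; exact sn_app_left (ih h)

/-- One step inside a list of arguments. -/
inductive SLO : List Lam → List Lam → Prop
| head {P P' : Lam} {Ps : List Lam} : StepB P P' → SLO (P :: Ps) (P' :: Ps)
| tail {P : Lam} {Ps Ps' : List Lam} : SLO Ps Ps' → SLO (P :: Ps) (P :: Ps')

lemma apps_step_arg : ∀ {Ps Ps' : List Lam}, SLO Ps Ps' → ∀ (H : Lam),
    StepB (apps H Ps) (apps H Ps') := by
  intro Ps Ps' h
  induction h with
  | head hs => intro H; exact apps_step_head (StepB.appR hs) _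
  | tail _ ih => intro H; exact ih _

lemma step_apps_inv : ∀ (Ps : List Lam) (H Q : Lam),
    (∀ H'', H ≠ .lam H'') → StepB (apps H Ps) Q →
    (∃ H', StepB H H' ∧ Q = apps H' Ps) ∨
    (∃ Ps', SLO Ps Ps' ∧ Q = apps H Ps') := by
  intro Ps
  induction Ps with
  | nil =>
      intro H Q _ h
      exact Or.inl ⟨Q, h, rfl⟩
  | cons P Ps ih =>
      intro H Q hH h
      rw [apps_cons] at h
      rcases ih (.app H P) Q (fun _ => by simp) h with ⟨H', hs, rfl⟩ | ⟨Ps', hs, rfl⟩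
      · cases hs with
        | @beta M N => exact absurd rfl (hH M)
        | @appL _ M' _ hs' => exact Or.inl ⟨M', hs', rfl⟩
        | @appR _ _ N' hs' =>
            exact Or.inr ⟨N' :: Ps, SLO.head hs', rfl⟩
      · exact Or.inr ⟨P :: Ps', SLO.tail hs, rfl⟩

/-! #### Neutral terms -/

inductive Ne : Lam → Prop
| var (n : ℕ) : Ne (.var n)
| const (c : ℕ) : Ne (.const c)
| cx : Ne .cx
| cty (σ : BTy) : Ne (.cty σ)
| app {M N : Lam} : Ne M → Acc Red N → Ne (.app M N)

lemma ne_not_lam {M : Lam} (h : Ne M) : ∀ H, M ≠ .lam H := by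
  cases h <;> intro H <;> simp

lemma ne_step : ∀ {M M' : Lam}, Ne M → StepB M M' → Ne M' := by
  intro M M' hM h
  induction h with
  | @beta P N => cases hM with | app h1 h2 => exact absurd h1 (by intro h1; cases h1)
  | @appL M M' N hs ih =>
      cases hM with
      | app h1 h2 => exact Ne.app (ih h1) h2
  | @appR M N N' hs ih =>
      cases hM with
      | app h1 h2 => exact Ne.app h1 (sn_step h2 hs)
  | @lam M M' hs ih => cases hM

lemma ne_sn : ∀ {M : Lam}, Ne M → Acc Red M := by
  intro M h
  induction h with
  | var n => exact Acc.intro _ (fun y hy => by cases hy)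
  | const c => exact Acc.intro _ (fun y hy => by cases hy)
  | cx => exact Acc.intro _ (fun y hy => by cases hy)
  | cty σ => exact Acc.intro _ (fun y hy => by cases hy)
  | @app M N hM hN ihM =>
      have aux : ∀ M, Acc Red M → Ne M → ∀ N, Acc Red N → Acc Red (Lam.app M N) := by
        intro M hM
        induction hM with
        | intro M _ ihM =>
            intro hMne N hN
            induction hN with
            | intro N hNacc ihN =>
                refine Acc.intro _ ?_
                intro Q hQ
                cases hQ with
                | @beta P _ => exact absurd rfl (ne_not_lam hMne P)
                | appL hs => exact ihM _ hs (ne_step hMne hs) _ (Acc.intro N hNacc)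
                | appR hs => exact ihN _ hs
      exact aux M ihM hM N hN

/-! #### The key β-expansion lemma -/

lemma key_aux : ∀ (N : Lam), Acc Red N → ∀ (X : Lam), Acc Red X →
    ∀ (M : Lam) (Ps : List Lam), X = apps (Lam.subst 0 N M) Ps →
    Acc Red (apps (.app (.lam M) N) Ps) := by
  intro N hN
  induction hN with
  | intro N hNacc ihN =>
      intro X hX
      induction hX with
      | intro X hXacc ihX =>
          intro M Ps hEq
          refine Acc.intro _ ?_
          intro Q hQ
          rcases step_apps_inv Ps (.app (.lam M) N) Q (fun _ => by simp) hQ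
            with ⟨H', hs, rfl⟩ | ⟨Ps', hs, rfl⟩
          · cases hs with
            | beta =>
                rw [← hEq]
                exact Acc.intro X hXacc
            | @appL _ W _ hsW =>
                cases hsW with
                | @lam _ M' hsM =>
                    have hstep : StepB X (apps (Lam.subst 0 N M') Ps) := by
                      rw [hEq]
                      exact apps_step_head (step_subst0 hsM N) Ps
                    exact ihX _ hstep M' Ps rfl
            | @appR _ _ N' hsN =>
                have hrtg : Relation.ReflTransGen StepB X (apps (Lam.subst 0 N' M) Ps) := by
                  rw [hEq]
                  exact apps_rtg_head (rtg_subst0_arg hsN M) Ps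
                exact ihN N' hsN _ (sn_rtg (Acc.intro X hXacc) hrtg) M Ps rfl
          · have hstep : StepB X (apps (Lam.subst 0 N M) Ps') := by
              rw [hEq]
              exact apps_step_arg hs _
            exact ihX _ hstep M Ps' rfl

lemma key {N M : Lam} {Ps : List Lam} (hN : Acc Red N)
    (hX : Acc Red (apps (Lam.subst 0 N M) Ps)) :
    Acc Red (apps (.app (.lam M) N) Ps) :=
  key_aux N hN _ hX M Ps rfl

/-! #### Saturated sets and the type interpretation -/

def Sat (X : Lam → Prop) : Prop :=
  (∀ M, X M → Acc Red M) ∧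
  (∀ M, Ne M → X M) ∧
  (∀ M N Ps, Acc Red N → X (apps (Lam.subst 0 N M) Ps) →
    X (apps (.app (.lam M) N) Ps))

lemma sat_sn : Sat (Acc Red) :=
  ⟨fun _ h => h, fun _ h => ne_sn h, fun _ _ _ hN hX => key hN hX⟩

def Interp : BTy → Lam → Prop
| .atom _ => Acc Red
| .top => Acc Red
| .arr σ τ => fun M => ∀ N, Interp σ N → Interp τ (.app M N)
| .inter σ τ => fun M => Interp σ M ∧ Interp τ M
| .union σ τ => fun M => Interp σ M ∨ Interp τ M

lemma sat_interp : ∀ (σ : BTy), Sat (Interp σ) := by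
  intro σ
  induction σ with
  | atom a => exact sat_sn
  | top => exact sat_sn
  | arr σ τ ihσ ihτ =>
      refine ⟨?_, ?_, ?_⟩
      · intro M hM
        have h0 : Interp σ (.var 0) := ihσ.2.1 _ (Ne.var 0)
        have := ihτ.1 _ (hM _ h0)
        exact sn_app_left this
      · intro M hM N hN
        exact ihτ.2.1 _ (Ne.app hM (ihσ.1 _ hN))
      · intro M N Ps hN hX P hP
        have := ihτ.2.2 M N (Ps ++ [P]) hN (by
          rw [apps_concat]
          exact hX P hP)
        rw [apps_concat] at this
        exact this
  | inter σ τ ihσ ihτ =>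
      refine ⟨?_, ?_, ?_⟩
      · intro M hM; exact ihσ.1 _ hM.1
      · intro M hM; exact ⟨ihσ.2.1 _ hM, ihτ.2.1 _ hM⟩
      · intro M N Ps hN hX
        exact ⟨ihσ.2.2 _ _ _ hN hX.1, ihτ.2.2 _ _ _ hN hX.2⟩
  | union σ τ ihσ ihτ =>
      refine ⟨?_, ?_, ?_⟩
      · intro M hM; rcases hM with h | h
        · exact ihσ.1 _ h
        · exact ihτ.1 _ h
      · intro M hM; exact Or.inl (ihσ.2.1 _ hM)
      · intro M N Ps hN hX
        rcases hX with h | h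
        · exact Or.inl (ihσ.2.2 _ _ _ hN h)
        · exact Or.inr (ihτ.2.2 _ _ _ hN h)

/-- Soundness of the subtype theory. -/
lemma sub_sound : ∀ {σ τ : BTy}, SubB σ τ → ∀ M, Interp σ M → Interp τ M := by
  intro σ τ h
  induction h with
  | idemInter => intro M hM; exact ⟨hM, hM⟩
  | idemUnion => intro M hM; exact hM.elim id id
  | interL => intro M hM; exact hM.1
  | interR => intro M hM; exact hM.2
  | unionL => intro M hM; exact Or.inl hM
  | unionR => intro M hM; exact Or.inr hM
  | refl => intro M hM; exact hM
  | monoInter _ _ ih1 ih2 => intro M hM; exact ⟨ih1 _ hM.1, ih2 _ hM.2⟩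
  | monoUnion _ _ ih1 ih2 =>
      intro M hM; exact hM.imp (ih1 _) (ih2 _)
  | trans _ _ ih1 ih2 => intro M hM; exact ih2 _ (ih1 _ hM)
  | dist =>
      intro M hM
      rcases hM with ⟨h1, h2 | h2⟩
      · exact Or.inl ⟨h1, h2⟩
      · exact Or.inr ⟨h1, h2⟩
  | arrInter => intro M hM N hN; exact ⟨hM.1 N hN, hM.2 N hN⟩
  | arrUnion =>
      intro M hM N hN
      rcases hN with h | h
      · exact hM.1 N h
      · exact hM.2 N h
  | arrow _ _ ih1 ih2 =>
      intro M hM N hN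
      exact ih2 _ (hM N (ih1 N hN))

/-- The fundamental lemma. -/
lemma fund : ∀ {Γ : List BTy} {M : Lam} {σ : BTy},
    BPlus (fun _ _ => False) Γ M σ →
    ∀ (θ : ℕ → Lam), (∀ n τ, Γ[n]? = some τ → Interp τ (θ n)) →
    Interp σ (msub θ M) := by
  intro Γ M σ h
  induction h with
  | @var Γ n σ hget => intro θ hθ; exact hθ n σ hget
  | const hc => exact absurd hc id
  | cx =>
      intro θ hθ
      exact (sat_interp _).2.1 _ Ne.cx
  | cty =>
      intro θ hθ
      exact (sat_interp _).2.1 _ (Ne.cty _)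
  | @abs Γ M σ τ _ ih =>
      intro θ hθ
      intro N hN
      have hNsn : Acc Red N := (sat_interp σ).1 _ hN
      have hbody : Interp τ (Lam.subst 0 N (msub (up θ) M)) := by
        rw [subst0_msub_up]
        refine ih (scons N θ) ?_
        intro n τ' hget
        cases n with
        | zero =>
            simp only [List.getElem?_cons_zero] at hget
            cases hget
            exact hN
        | succ n =>
            exact hθ n τ' hget
      have := (sat_interp τ).2.2 (msub (up θ) M) N [] hNsn hbody
      exact this
  | app _ _ ih1 ih2 =>
      intro θ hθ
      exact ih1 θ hθ _ (ih2 θ hθ)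
  | interI _ _ ih1 ih2 => intro θ hθ; exact ⟨ih1 θ hθ, ih2 θ hθ⟩
  | interEl _ ih => intro θ hθ; exact (ih θ hθ).1
  | interEr _ ih => intro θ hθ; exact (ih θ hθ).2
  | unionIl _ ih => intro θ hθ; exact Or.inl (ih θ hθ)
  | unionIr _ ih => intro θ hθ; exact Or.inr (ih θ hθ)
  | @unionE Γ M N σ τ ρ _ _ _ ih1 ih2 ih3 =>
      intro θ hθ
      rw [msub_subst0]
      have hN := ih3 θ hθ
      rcases hN with h | h
      · refine ih1 (scons (msub θ N) θ) ?_
        intro n τ' hget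
        cases n with
        | zero => simp only [List.getElem?_cons_zero] at hget; cases hget; exact h
        | succ n => exact hθ n τ' hget
      · refine ih2 (scons (msub θ N) θ) ?_
        intro n τ' hget
        cases n with
        | zero => simp only [List.getElem?_cons_zero] at hget; cases hget; exact h
        | succ n => exact hθ n τ' hget
  | sub _ hsub ih =>
      intro θ hθ
      exact sub_sound hsub _ (ih θ hθ)

end SNProof

/-- System B without ω (no constant axioms, pure λ-terms, subtyping theory Ξ
    without the ω-axioms) assigns types only to strongly β-normalizing
    terms. -/
theorem systemB_types_only_SN :
    ∀ (Γ : List BTy) (M : Lam) (σ : BTy),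
      M.Pure → BPlus (fun _ _ => False) Γ M σ → M.SNBeta := by
  intro Γ M σ _ h
  have := SNProof.fund h Lam.var
    (fun n τ _ => (SNProof.sat_interp τ).2.1 _ (SNProof.Ne.var n))
  rw [SNProof.msub_id] at this
  exact (SNProof.sat_interp σ).1 _ this

end LFDelta
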